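/- Let D be a strongly connected digraph belonging to the class 𝒟, and let i, j be vertices of D. If C and C̃ are cycle chains from i to j, each of which is an alternating cycle chain with respect to some maximum matching of D, then C = C̃; that is, any alternating cycle chain between two given vertices of D is unique. -/

import Mathlib

open Matrix

/-- Adjacency in a digraph given by relation `G`: a 2-cycle between distinct `i` and `j`. -/
def Adjd {n : ℕ} (G : Fin n → Fin n → Prop) (i j : Fin n) : Prop :=
  i ≠ j ∧ G i j ∧ G j i

/-- `G` is a simple symmetric digraph: no loops and edges come in both directions. -/
def IsSSD {n : ℕ} (G : Fin n → Fin n → Prop) : Prop :=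
  (∀ i, ¬ G i i) ∧ ∀ i j, G i j → G j i

/-- A vertex is pendant if it is incident to exactly one 2-cycle. -/
def Pendant {n : ℕ} (G : Fin n → Fin n → Prop) (i : Fin n) : Prop :=
  ∃! j, Adjd G i j

/-- The class 𝒟: simple symmetric digraphs in which every non-pendant vertex is
adjacent to at least one pendant vertex. -/
def InClassD {n : ℕ} (G : Fin n → Fin n → Prop) : Prop :=
  IsSSD G ∧ ∀ i, ¬ Pendant G i → ∃ j, Adjd G i j ∧ Pendant G j

/-- Strong connectivity: a directed path from every vertex to every other vertex. -/
def StronglyConnected {n : ℕ} (G : Fin n → Fin n → Prop) : Prop :=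
  ∀ i j : Fin n, Relation.ReflTransGen G i j

/-- An unordered pair `e` is a 2-cycle of `G`. -/
def IsEdge {n : ℕ} (G : Fin n → Fin n → Prop) (e : Sym2 (Fin n)) : Prop :=
  ∃ i j, e = s(i, j) ∧ Adjd G i j

/-- A matching: a set of pairwise vertex-disjoint 2-cycles. -/
def IsMatching {n : ℕ} (G : Fin n → Fin n → Prop) (M : Finset (Sym2 (Fin n))) : Prop :=
  (∀ e ∈ M, IsEdge G e) ∧
  ∀ e ∈ M, ∀ f ∈ M, e ≠ f → ∀ v : Fin n, v ∈ e → v ∉ f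

/-- A maximum matching: a matching of maximum cardinality. -/
def IsMaxMatching {n : ℕ} (G : Fin n → Fin n → Prop) (M : Finset (Sym2 (Fin n))) : Prop :=
  IsMatching G M ∧ ∀ M', IsMatching G M' → M'.card ≤ M.card

/-- A cycle chain, recorded by its list of (distinct) vertices `i₁, …, i_{m+1}`. -/
def IsCycleChain {n : ℕ} (G : Fin n → Fin n → Prop) (c : List (Fin n)) : Prop :=
  c.Nodup ∧ 2 ≤ c.length ∧ c.Chain' (Adjd G)

/-- A cycle chain from `i` to `j`. -/
def IsCycleChainBtw {n : ℕ} (G : Fin n → Fin n → Prop) (i j : Fin n) (c : List (Fin n)) : Prop :=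
  IsCycleChain G c ∧ c.head? = some i ∧ c.getLast? = some j

/-- The list of 2-cycles of a cycle chain. -/
def chainEdges {n : ℕ} (c : List (Fin n)) : List (Sym2 (Fin n)) :=
  List.zipWith (fun a b => s(a, b)) c c.tail

/-- The cycle chain `c` is alternating with respect to `M`: its 2-cycles are alternately
in `M` and outside `M`, with the first and last 2-cycle in `M` (so its length is odd). -/
def IsAltChain {n : ℕ} (M : Finset (Sym2 (Fin n))) (c : List (Fin n)) : Prop :=
  Odd (chainEdges c).length ∧
  ∀ k (h : k < (chainEdges c).length), ((chainEdges c).get ⟨k, h⟩ ∈ M ↔ Even k)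

/-- The digraph of a square matrix: edge `(i,j)` iff `A i j ≠ 0`. -/
def DA {n : ℕ} (A : Matrix (Fin n) (Fin n) ℝ) : Fin n → Fin n → Prop :=
  fun i j => A i j ≠ 0

/-- The cycle product `a_{ij} a_{ji}` of a 2-cycle. -/
def cycProd {n : ℕ} (A : Matrix (Fin n) (Fin n) ℝ) (e : Sym2 (Fin n)) : ℝ :=
  Sym2.lift ⟨fun i j => A i j * A j i, fun i j => mul_comm _ _⟩ e

/-- The matching product η(M) of a matching `M`. -/
noncomputable def matchProd {n : ℕ} (A : Matrix (Fin n) (Fin n) ℝ)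
    (M : Finset (Sym2 (Fin n))) : ℝ :=
  ∏ e ∈ M, cycProd A e

/-- The (finite) collection of all maximum matchings of `D(A)`. -/
noncomputable def maxMatchings {n : ℕ} (A : Matrix (Fin n) (Fin n) ℝ) :
    Finset (Finset (Sym2 (Fin n))) :=
  {M | IsMaxMatching (DA A) M}.toFinite.toFinset

/-- Δ_A: the sum of the matching products over all maximum matchings of `D(A)`. -/
noncomputable def Delta {n : ℕ} (A : Matrix (Fin n) (Fin n) ℝ) : ℝ :=
  ∑ M ∈ maxMatchings A, matchProd A M

/-- 𝕄(i,j): maximum matchings with respect to which some cycle chain from `i` to `j`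
is an alternating cycle chain. -/
def MMset {n : ℕ} (A : Matrix (Fin n) (Fin n) ℝ) (i j : Fin n) :
    Set (Finset (Sym2 (Fin n))) :=
  {M | IsMaxMatching (DA A) M ∧ ∃ c, IsCycleChainBtw (DA A) i j c ∧ IsAltChain M c}

/-- `i` and `j` are maximally matchable: 𝕄(i,j) ≠ ∅. -/
def MaxMatchable {n : ℕ} (A : Matrix (Fin n) (Fin n) ℝ) (i j : Fin n) : Prop :=
  (MMset A i j).Nonempty

open scoped Classical in
/-- The (unique) alternating cycle chain from `i` to `j`, when it exists. -/
noncomputable def theChain {n : ℕ} (A : Matrix (Fin n) (Fin n) ℝ) (i j : Fin n) :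
    List (Fin n) :=
  if h : ∃ c, IsCycleChainBtw (DA A) i j c ∧ ∃ M ∈ MMset A i j, IsAltChain M c
  then h.choose else []

/-- The path product along a cycle chain: `a_{i₁ i₂} a_{i₂ i₃} ⋯ a_{i_m i_{m+1}}`. -/
def pathProd {n : ℕ} (A : Matrix (Fin n) (Fin n) ℝ) (c : List (Fin n)) : ℝ :=
  (List.zipWith (fun a b => A a b) c c.tail).prod

open scoped Classical in
/-- β_{ij} = (−1)^{(m−1)/2} P_m(i,j) for maximally matchable `i, j`, and `0` otherwise. -/
noncomputable def beta {n : ℕ} (A : Matrix (Fin n) (Fin n) ℝ) (i j : Fin n) : ℝ :=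
  if MaxMatchable A i j then
    (-1 : ℝ) ^ (((theChain A i j).length - 2) / 2) * pathProd A (theChain A i j)
  else 0

/-- β̄_{i,j}(M): product of the cycle products of the 2-cycles of `M` not contained in
the alternating cycle chain from `i` to `j`. -/
noncomputable def betaBar {n : ℕ} (A : Matrix (Fin n) (Fin n) ℝ) (i j : Fin n)
    (M : Finset (Sym2 (Fin n))) : ℝ :=
  ∏ e ∈ M.filter (fun e => e ∉ chainEdges (theChain A i j)), cycProd A e

/-- μ_{ij} = β_{ij} · Σ_{M ∈ 𝕄(i,j)} β̄_{i,j}(M). -/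
noncomputable def mu {n : ℕ} (A : Matrix (Fin n) (Fin n) ℝ) (i j : Fin n) : ℝ :=
  beta A i j * ∑ M ∈ (MMset A i j).toFinite.toFinset, betaBar A i j M

/-- `X` is a group inverse of `A`. -/
def IsGroupInverse {n : ℕ} (A X : Matrix (Fin n) (Fin n) ℝ) : Prop :=
  A * X * A = A ∧ X * A * X = X ∧ A * X = X * A

/-- A tree digraph: strongly connected and all of its cycles have length 2. -/
def IsTreeDigraph {n : ℕ} (G : Fin n → Fin n → Prop) : Prop :=
  StronglyConnected G ∧
  ∀ (a : Fin n) (l : List (Fin n)), (a :: l).Nodup → List.Chain G a l →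
    G ((a :: l).getLast (List.cons_ne_nil a l)) a → (a :: l).length = 2

/-- A star tree digraph: a tree digraph with a center adjacent to every other vertex,
every other vertex being adjacent only to the center. -/
def IsStarTree {n : ℕ} (G : Fin n → Fin n → Prop) : Prop :=
  IsTreeDigraph G ∧
  ∃ c : Fin n, (∀ j, j ≠ c → Adjd G c j) ∧ ∀ i j, Adjd G i j → i = c ∨ j = c

/-- A corona digraph: a simple symmetric digraph in which each non-pendant vertex is
adjacent to exactly one pendant vertex. -/
def IsCorona {n : ℕ} (G : Fin n → Fin n → Prop) : Prop :=
  IsSSD G ∧ ∀ i, ¬ Pendant G i → ∃! j, Adjd G i j ∧ Pendant G j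

/-- 𝕄(i): the maximum matchings in which vertex `i` is matched. -/
noncomputable def MMi {n : ℕ} (A : Matrix (Fin n) (Fin n) ℝ) (i : Fin n) :
    Finset (Finset (Sym2 (Fin n))) :=
  {M | IsMaxMatching (DA A) M ∧ ∃ e ∈ M, i ∈ e}.toFinite.toFinset

section
variable {n : ℕ} {G : Fin n → Fin n → Prop}

lemma Adjd.symm' {i j : Fin n} (h : Adjd G i j) : Adjd G j i := ⟨h.1.symm, h.2.2, h.2.1⟩

lemma pendant_unique {p x y : Fin n} (hp : Pendant G p) (hx : Adjd G p x) (hy : Adjd G p y) :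
    x = y := by
  obtain ⟨z, _, hu⟩ := hp
  rw [hu x hx, hu y hy]

lemma nonpendant_of_two {p x y : Fin n} (hx : Adjd G p x) (hy : Adjd G p y) (hxy : x ≠ y) :
    ¬ Pendant G p := fun hp => hxy (pendant_unique hp hx hy)

/-- If a pendant `p` adjacent to `u` lies in an edge `f` of a matching, then `f = s(p,u)`. -/
lemma matched_pendant {M : Finset (Sym2 (Fin n))} (hM : IsMatching G M) {p u : Fin n}
    (hp : Pendant G p) (hpu : Adjd G p u) {f : Sym2 (Fin n)} (hf : f ∈ M) (hpf : p ∈ f) :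
    f = s(p, u) := by
  obtain ⟨x, y, rfl, hxy⟩ := hM.1 f hf
  rcases Sym2.mem_iff.mp hpf with rfl | rfl
  · rw [pendant_unique hp hxy hpu]
  · rw [pendant_unique hp hxy.symm' hpu, Sym2.eq_swap]

/-- A pendant `p` adjacent to `u` is unmatched in `M` when `u` is covered by an edge
not containing `p`. -/
lemma pendant_unmatched {M : Finset (Sym2 (Fin n))} (hM : IsMatching G M) {p u : Fin n}
    (hp : Pendant G p) (hpu : Adjd G p u) {e : Sym2 (Fin n)} (he : e ∈ M) (hu : u ∈ e)
    (hpe : p ∉ e) {f : Sym2 (Fin n)} (hf : f ∈ M) : p ∉ f := by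
  intro hpf
  have hfe : f ≠ e := fun h => hpe (h ▸ hpf)
  have := matched_pendant hM hp hpu hf hpf
  exact hM.2 f hf e he hfe u (this ▸ Sym2.mem_mk_right p u) hu

/-- Every edge of a maximum matching in a class-𝒟 digraph has a pendant endpoint. -/
lemma matched_edge_pendant (hD : InClassD G) {M : Finset (Sym2 (Fin n))}
    (hM : IsMaxMatching G M) {x y : Fin n} (he : s(x, y) ∈ M) :
    Adjd G x y ∧ (Pendant G x ∨ Pendant G y) := by
  have hadj : Adjd G x y := by
    obtain ⟨u, v, huv, hA⟩ := hM.1.1 _ he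
    rcases Sym2.eq_iff.mp huv with ⟨rfl, rfl⟩ | ⟨rfl, rfl⟩
    · exact hA
    · exact hA.symm'
  refine ⟨hadj, ?_⟩
  by_contra hcon
  push_neg at hcon
  obtain ⟨hnx, hny⟩ := hcon
  obtain ⟨p, hxp, hp⟩ := hD.2 x hnx
  obtain ⟨q, hyq, hq⟩ := hD.2 y hny
  have hpx : Adjd G p x := hxp.symm'
  have hqy : Adjd G q y := hyq.symm'
  have hxy : x ≠ y := hadj.1
  have hpy : p ≠ y := fun h => hny (h ▸ hp)
  have hqx : q ≠ x := fun h => hnx (h ▸ hq)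
  have hpq : p ≠ q := by
    rintro rfl
    exact hxy (pendant_unique hp hpx hqy)
  have hpe : p ∉ s(x, y) := by
    simp only [Sym2.mem_iff, not_or]
    exact ⟨hpx.1, hpy⟩
  have hqe : q ∉ s(x, y) := by
    simp only [Sym2.mem_iff, not_or]
    exact ⟨hqx, hqy.1⟩
  have hxe : x ∈ s(x, y) := Sym2.mem_mk_left x y
  have hye : y ∈ s(x, y) := Sym2.mem_mk_right x y
  have hpun : ∀ f ∈ M, p ∉ f := fun f hf => pendant_unmatched hM.1 hp hpx he hxe hpe hf
  have hqun : ∀ f ∈ M, q ∉ f := fun f hf => pendant_unmatched hM.1 hq hqy he hye hqe hf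
  -- the augmented matching
  set M' : Finset (Sym2 (Fin n)) := insert s(p, x) (insert s(q, y) (M.erase s(x, y))) with hM'def
  have hmem_px : ∀ v : Fin n, v ∈ s(p, x) ↔ v = p ∨ v = x := fun v => Sym2.mem_iff
  have hmem_qy : ∀ v : Fin n, v ∈ s(q, y) ↔ v = q ∨ v = y := fun v => Sym2.mem_iff
  -- disjointness from old edges
  have hold : ∀ f ∈ M.erase s(x, y), ∀ v : Fin n, v ∈ s(p, x) ∨ v ∈ s(q, y) → v ∉ f := by
    intro f hf v hv hvf
    have hfM := Finset.mem_of_mem_erase hf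
    have hfne := Finset.ne_of_mem_erase hf
    rcases hv with hv | hv
    · rcases (hmem_px v).mp hv with rfl | rfl
      · exact hpun f hfM hvf
      · exact hM.1.2 _ he f hfM (Ne.symm hfne) v hxe hvf
    · rcases (hmem_qy v).mp hv with rfl | rfl
      · exact hqun f hfM hvf
      · exact hM.1.2 _ he f hfM (Ne.symm hfne) v hye hvf
  have hdisj_new : ∀ v : Fin n, v ∈ s(p, x) → v ∉ s(q, y) := by
    intro v hv
    rcases (hmem_px v).mp hv with rfl | rfl
    · simp only [Sym2.mem_iff, not_or]; exact ⟨hpq, hpy⟩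
    · simp only [Sym2.mem_iff, not_or]; exact ⟨fun h => hqx h.symm, hxy⟩
  have hmatch : IsMatching G M' := by
    constructor
    · intro e heM'
      simp only [hM'def, Finset.mem_insert] at heM'
      rcases heM' with rfl | rfl | heM'
      · exact ⟨p, x, rfl, hpx⟩
      · exact ⟨q, y, rfl, hqy⟩
      · exact hM.1.1 _ (Finset.mem_of_mem_erase heM')
    · intro e heM' f hfM' hef v hve
      simp only [hM'def, Finset.mem_insert] at heM' hfM'
      rcases heM' with rfl | rfl | heM' <;> rcases hfM' with rfl | rfl | hfM'
      · exact absurd rfl hef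
      · exact hdisj_new v hve
      · exact hold f hfM' v (Or.inl hve)
      · intro hvf; exact hdisj_new v hvf hve
      · exact absurd rfl hef
      · exact hold f hfM' v (Or.inr hve)
      · intro hvf; exact hold e heM' v (Or.inl hvf) hve
      · intro hvf; exact hold e heM' v (Or.inr hvf) hve
      · exact hM.1.2 _ (Finset.mem_of_mem_erase heM') _ (Finset.mem_of_mem_erase hfM') hef v hve
  -- cardinality
  have hpxnot : s(p, x) ∉ insert s(q, y) (M.erase s(x, y)) := by
    simp only [Finset.mem_insert, not_or]
    constructor
    · intro h
      exact hdisj_new p (Sym2.mem_mk_left p x) (h ▸ Sym2.mem_mk_left p x)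
    · intro h
      exact hold _ h p (Or.inl (Sym2.mem_mk_left p x)) (Sym2.mem_mk_left p x)
  have hqynot : s(q, y) ∉ M.erase s(x, y) := by
    intro h
    exact hold _ h q (Or.inr (Sym2.mem_mk_left q y)) (Sym2.mem_mk_left q y)
  have hcard : M'.card = M.card + 1 := by
    have h1 : 1 ≤ M.card := Finset.card_pos.mpr ⟨_, he⟩
    rw [hM'def, Finset.card_insert_of_notMem hpxnot, Finset.card_insert_of_notMem hqynot,
      Finset.card_erase_of_mem he]
    omega
  have := hM.2 M' hmatch
  omega

/-- Structure of an alternating cycle chain in a class-𝒟 digraph: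
it is either a single 2-cycle or a chain of three 2-cycles with pendant endpoints. -/
lemma alt_chain_struct (hD : InClassD G) {M : Finset (Sym2 (Fin n))}
    (hM : IsMaxMatching G M) {i j : Fin n} {c : List (Fin n)}
    (hc : IsCycleChainBtw G i j c) (ha : IsAltChain M c) :
    c = [i, j] ∨ ∃ a b, c = [i, a, b, j] ∧ Pendant G i ∧ Pendant G j := by
  obtain ⟨⟨hnd, hlen, hch⟩, hhead, hlast⟩ := hc
  obtain ⟨hodd, hmem⟩ := ha
  rcases c with _ | ⟨x0, _ | ⟨x1, _ | ⟨x2, _ | ⟨x3, _ | ⟨x4, _ | ⟨x5, rest⟩⟩⟩⟩⟩⟩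
  · simp at hlen
  · simp at hlen
  · -- length 2
    simp only [List.head?_cons, Option.some.injEq] at hhead
    simp only [List.getLast?] at hlast
    left
    simp_all
  · -- length 3: chain with 2 edges, not odd
    exfalso
    simp [chainEdges, Nat.odd_iff] at hodd
  · -- length 4
    right
    have h0 : x0 = i := by simpa using hhead
    have h3 : x3 = j := by simpa using hlast
    simp only [List.Chain', List.isChain_cons_cons, List.isChain_singleton, and_true] at hch
    obtain ⟨h01, h12, h23⟩ := hch
    simp only [List.nodup_cons, List.mem_cons, List.mem_singleton, List.not_mem_nil,
      not_or, List.nodup_nil] at hnd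
    have hlen2 : 2 < (chainEdges [x0, x1, x2, x3]).length := by simp [chainEdges]
    have hlen0 : 0 < (chainEdges [x0, x1, x2, x3]).length := by simp [chainEdges]
    have he0 : s(x0, x1) ∈ M := by
      have := (hmem 0 hlen0).mpr (by decide)
      simpa [chainEdges] using this
    have he2 : s(x2, x3) ∈ M := by
      have := (hmem 2 hlen2).mpr (by decide)
      simpa [chainEdges] using this
    have hx1np : ¬ Pendant G x1 := nonpendant_of_two h01.symm' h12 (by tauto)
    have hx2np : ¬ Pendant G x2 := nonpendant_of_two h12.symm' h23 (by tauto)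
    have hi : Pendant G x0 := by
      rcases (matched_edge_pendant hD hM he0).2 with h | h
      · exact h
      · exact absurd h hx1np
    have hj : Pendant G x3 := by
      rcases (matched_edge_pendant hD hM he2).2 with h | h
      · exact absurd h hx2np
      · exact h
    exact ⟨x1, x2, by rw [h0, h3], h0 ▸ hi, h3 ▸ hj⟩
  · -- length 5: 4 edges, not odd
    exfalso
    simp [chainEdges, Nat.odd_iff] at hodd
  · -- length ≥ 6: impossible
    exfalso
    simp only [List.Chain', List.isChain_cons_cons] at hch
    obtain ⟨h01, h12, h23, h34, hch⟩ := hch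
    simp only [List.nodup_cons, List.mem_cons, not_or] at hnd
    have hx13 : x1 ≠ x3 := by tauto
    have hx24 : x2 ≠ x4 := by tauto
    have hlen2 : 2 < (chainEdges (x0 :: x1 :: x2 :: x3 :: x4 :: x5 :: rest)).length := by
      simp [chainEdges]
    have he2 : s(x2, x3) ∈ M := by
      have := (hmem 2 hlen2).mpr (by decide)
      simpa [chainEdges] using this
    have hx2np : ¬ Pendant G x2 := nonpendant_of_two h12.symm' h23 hx13
    have hx3np : ¬ Pendant G x3 := nonpendant_of_two h23.symm' h34 hx24
    rcases (matched_edge_pendant hD hM he2).2 with h | h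
    · exact hx2np h
    · exact hx3np h

end

/-- Proposition: in a strongly connected digraph of class `𝒟`, the alternating cycle chain
between two given vertices (w.r.t. any maximum matchings) is unique. -/
theorem alt_chain_unique {n : ℕ} (G : Fin n → Fin n → Prop)
    (hD : InClassD G) (hSC : StronglyConnected G) (i j : Fin n)
    (c c' : List (Fin n)) (M M' : Finset (Sym2 (Fin n)))
    (hM : IsMaxMatching G M) (hM' : IsMaxMatching G M')
    (hc : IsCycleChainBtw G i j c) (hc' : IsCycleChainBtw G i j c')
    (ha : IsAltChain M c) (ha' : IsAltChain M' c') :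
    c = c' := by
  rcases alt_chain_struct hD hM hc ha with h2 | ⟨a, b, h4, hpi, hpj⟩ <;>
    rcases alt_chain_struct hD hM' hc' ha' with h2' | ⟨a', b', h4', hpi', hpj'⟩
  · rw [h2, h2']
  · -- c = [i,j], c' = [i,a',b',j] : contradiction
    exfalso
    have hij : Adjd G i j := by
      have := hc.1.2.2
      rw [h2] at this
      simpa [List.Chain', List.isChain_pair] using this
    have hia' : Adjd G i a' := by
      have := hc'.1.2.2
      rw [h4'] at this
      simp only [List.Chain', List.isChain_cons_cons, List.isChain_singleton, and_true] at this
      exact this.1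
    have : j = a' := pendant_unique hpi' hij hia'
    have hnd := hc'.1.1
    rw [h4'] at hnd
    simp only [List.nodup_cons, List.mem_cons, List.mem_singleton, not_or] at hnd
    exact hnd.2.1.2.1 this.symm
  · -- symmetric contradiction
    exfalso
    have hij : Adjd G i j := by
      have := hc'.1.2.2
      rw [h2'] at this
      simpa [List.Chain', List.isChain_pair] using this
    have hia : Adjd G i a := by
      have := hc.1.2.2
      rw [h4] at this
      simp only [List.Chain', List.isChain_cons_cons, List.isChain_singleton, and_true] at this
      exact this.1
    have : j = a := pendant_unique hpi hij hia
    have hnd := hc.1.1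
    rw [h4] at hnd
    simp only [List.nodup_cons, List.mem_cons, List.mem_singleton, not_or] at hnd
    exact hnd.2.1.2.1 this.symm
  · -- both length 4
    have hia : Adjd G i a := by
      have := hc.1.2.2; rw [h4] at this
      simp only [List.Chain', List.isChain_cons_cons, List.isChain_singleton, and_true] at this
      exact this.1
    have hia' : Adjd G i a' := by
      have := hc'.1.2.2; rw [h4'] at this
      simp only [List.Chain', List.isChain_cons_cons, List.isChain_singleton, and_true] at this
      exact this.1
    have hjb : Adjd G j b := by
      have := hc.1.2.2; rw [h4] at this
      simp only [List.Chain', List.isChain_cons_cons, List.isChain_singleton, and_true] at this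
      exact this.2.2.symm'
    have hjb' : Adjd G j b' := by
      have := hc'.1.2.2; rw [h4'] at this
      simp only [List.Chain', List.isChain_cons_cons, List.isChain_singleton, and_true] at this
      exact this.2.2.symm'
    have haa : a = a' := pendant_unique hpi hia hia'
    have hbb : b = b' := pendant_unique hpj hjb hjb'
    rw [h4, h4', haa, hbb]
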